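/- arXiv:0802.0661 — 2 statements merged into one kernel-verified Lean document; each statement's English description precedes it below -/
import Mathlib

section
/- Let M be a nonempty compact topological space and (X, d) a metric space. Let f, g : M → X be continuous maps whose images differ, i.e. f '' (univ) ≠ g '' (univ). Then there exists ε > 0 such that for every homeomorphism ψ : M ≃ₜ M there is a point x ∈ M with d(f(ψ(x)), g(x)) ≥ ε. In particular, the infimum over all homeomorphisms ψ of sup_{x ∈ M} d(f(ψ(x)), g(x)) is strictly positive. -/
/-- Two continuous maps from a nonempty compact space into a metric space with
distinct images stay at a positive uniform distance from each other under
arbitrary reparametrizations of the domain by homeomorphisms; in particular the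
infimum over homeomorphisms of the sup-distance is strictly positive. -/
theorem stmt_0 {M X : Type*} [TopologicalSpace M] [CompactSpace M] [Nonempty M]
    [MetricSpace X] (f g : M → X) (hf : Continuous f) (hg : Continuous g)
    (hne : f '' Set.univ ≠ g '' Set.univ) :
    (∃ ε > (0 : ℝ), ∀ ψ : M ≃ₜ M, ∃ x : M, ε ≤ dist (f (ψ x)) (g x)) ∧
      0 < ⨅ ψ : M ≃ₜ M, ⨆ x : M, dist (f (ψ x)) (g x) := by
  have key : ∃ ε > (0 : ℝ), ∀ ψ : M ≃ₜ M, ∃ x : M, ε ≤ dist (f (ψ x)) (g x) := by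
    have hclf : IsClosed (f '' Set.univ) :=
      (isCompact_univ.image hf).isClosed
    have hclg : IsClosed (g '' Set.univ) :=
      (isCompact_univ.image hg).isClosed
    rcases (not_and_or.mp (fun h => hne (Set.Subset.antisymm h.1 h.2))) with h | h
    · obtain ⟨p, hpf, hpg⟩ := Set.not_subset.mp h
      obtain ⟨m, -, hm⟩ := hpf
      refine ⟨Metric.infDist p (g '' Set.univ),
        (hclg.notMem_iff_infDist_pos ⟨g (Classical.arbitrary M),
          Set.mem_image_of_mem _ (Set.mem_univ _)⟩).mp hpg, fun ψ => ?_⟩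
      refine ⟨ψ.symm m, ?_⟩
      rw [ψ.apply_symm_apply, hm]
      exact Metric.infDist_le_dist_of_mem (Set.mem_image_of_mem _ (Set.mem_univ _))
    · obtain ⟨p, hpg, hpf⟩ := Set.not_subset.mp h
      obtain ⟨m, -, hm⟩ := hpg
      refine ⟨Metric.infDist p (f '' Set.univ),
        (hclf.notMem_iff_infDist_pos ⟨f (Classical.arbitrary M),
          Set.mem_image_of_mem _ (Set.mem_univ _)⟩).mp hpf, fun ψ => ?_⟩
      refine ⟨m, ?_⟩
      rw [hm, dist_comm]
      exact Metric.infDist_le_dist_of_mem (Set.mem_image_of_mem _ (Set.mem_univ _))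
  obtain ⟨ε, hε, hεk⟩ := key
  refine ⟨⟨ε, hε, hεk⟩, lt_of_lt_of_le hε ?_⟩
  have : Nonempty (M ≃ₜ M) := ⟨Homeomorph.refl M⟩
  refine le_ciInf fun ψ => ?_
  obtain ⟨x, hx⟩ := hεk ψ
  have hbdd : BddAbove (Set.range fun x : M => dist (f (ψ x)) (g x)) := by
    rw [← Set.image_univ]
    exact (isCompact_univ.image
      ((hf.comp ψ.continuous).dist hg)).bddAbove
  exact hx.trans (le_ciSup hbdd x)
end

section
/- Let E, F, G be real normed vector spaces, let k ≥ 1 be a natural number, and let ψ : G → E and f : E → F be k times continuously differentiable maps (ContDiff ℝ k). Let y ∈ G and set x = ψ(y). Assume that the iterated Fréchet derivatives of f vanish at x in all orders 1 ≤ l ≤ k − 1, i.e. iteratedFDeriv ℝ l f x = 0 for 1 ≤ l < k. Then the k-th iterated Fréchet derivative of the composition satisfies iteratedFDeriv ℝ k (f ∘ ψ) y = (iteratedFDeriv ℝ k f x).compContinuousLinearMap (fun _ ↦ fderiv ℝ ψ y); that is, for all v₁, …, v_k ∈ G it sends (v₁, …, v_k) to (iteratedFDeriv ℝ k f x)(Dψ(y)v₁,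 …, Dψ(y)v_k). -/
open scoped Topology

/-- An ordered finpartition of `Fin n` with `n` parts is the atomic one. -/
lemma OrderedFinpartition.eq_atomic_of_length_eq {n : ℕ} (c : OrderedFinpartition n)
    (h : c.length = n) : c = OrderedFinpartition.atomic n := by
  classical
  have hsum : ∑ i, c.partSize i = n := by
    have := Fintype.card_congr c.equivSigma
    simpa [Fintype.card_sigma] using this
  have hone : ∀ i, c.partSize i = 1 := by
    intro i
    have h1 : ∑ _j ∈ Finset.univ.erase i, 1 ≤ ∑ j ∈ Finset.univ.erase i, c.partSize j :=
      Finset.sum_le_sum fun j _ ↦ c.partSize_pos j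
    have h2 : ∑ j ∈ Finset.univ.erase i, c.partSize j + c.partSize i = n := by
      rw [Finset.sum_erase_add _ _ (Finset.mem_univ i)]; exact hsum
    have hcard : (Finset.univ.erase i).card = n - 1 := by
      simp [Finset.card_erase_of_mem, h]
    rw [Finset.sum_const, hcard, smul_eq_mul, mul_one] at h1
    have := c.partSize_pos i
    have hn : 1 ≤ n := h ▸ i.pos
    omega
  obtain ⟨l, ps, pos, emb, embMono, partsMono, disj, cov⟩ := c
  simp only at h hone embMono partsMono
  subst h
  have hps : ps = fun _ ↦ 1 := funext hone
  subst hps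
  have hemb : (fun m ↦ emb m ⟨1 - 1, Nat.sub_one_lt_of_lt (pos m)⟩) = id := by
    apply (StrictMono.range_inj partsMono strictMono_id).1
    rw [Set.range_id]
    exact Set.range_eq_univ.2 (Finite.surjective_of_injective partsMono.injective)
  have hemb' : emb = fun m _ ↦ m := by
    funext m j
    have : j = ⟨1 - 1, Nat.sub_one_lt_of_lt (pos m)⟩ := Subsingleton.elim _ _
    rw [this]
    exact congrFun hemb m
  subst hemb'
  rfl

/-- A nonempty ordered finpartition has at least one part. -/
lemma OrderedFinpartition.one_le_length {n : ℕ} (hn : 1 ≤ n) (c : OrderedFinpartition n) :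
    1 ≤ c.length := by
  rcases c.cover ⟨0, hn⟩ with ⟨m, -⟩
  exact m.pos

/-- Chain rule for the first nonvanishing iterated derivative: if all iterated
Fréchet derivatives of `f` of orders `1 ≤ l < k` vanish at `x = ψ y`, then the
`k`-th iterated derivative of the composition `f ∘ ψ` at `y` is obtained from
`iteratedFDeriv ℝ k f x` by precomposing each argument with `fderiv ℝ ψ y`. -/
theorem stmt_1 {E F G : Type*} [NormedAddCommGroup E] [NormedSpace ℝ E]
    [NormedAddCommGroup F] [NormedSpace ℝ F]
    [NormedAddCommGroup G] [NormedSpace ℝ G]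
    (k : ℕ) (hk : 1 ≤ k) (ψ : G → E) (f : E → F)
    (hψ : ContDiff ℝ k ψ) (hf : ContDiff ℝ k f)
    (y : G) (x : E) (hx : x = ψ y)
    (hvanish : ∀ l : ℕ, 1 ≤ l → l < k → iteratedFDeriv ℝ l f x = 0) :
    iteratedFDeriv ℝ k (f ∘ ψ) y =
      (iteratedFDeriv ℝ k f x).compContinuousLinearMap (fun _ : Fin k => fderiv ℝ ψ y) := by
  classical
  subst hx
  have hfT : HasFTaylorSeriesUpTo (k : ℕ∞) f (ftaylorSeries ℝ f) :=
    contDiff_iff_ftaylorSeries.1 hf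
  have hψT : HasFTaylorSeriesUpTo (k : ℕ∞) ψ (ftaylorSeries ℝ ψ) :=
    contDiff_iff_ftaylorSeries.1 hψ
  have hcomp : HasFTaylorSeriesUpTo (k : ℕ∞) (f ∘ ψ)
      (fun z ↦ (ftaylorSeries ℝ f (ψ z)).taylorComp (ftaylorSeries ℝ ψ z)) := by
    rw [← hasFTaylorSeriesUpToOn_univ_iff]
    exact HasFTaylorSeriesUpToOn.comp
      ((hasFTaylorSeriesUpToOn_univ_iff).2 hfT) ((hasFTaylorSeriesUpToOn_univ_iff).2 hψT)
      (Set.mapsTo_univ _ _)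
  have key : (ftaylorSeries ℝ f (ψ y)).taylorComp (ftaylorSeries ℝ ψ y) k =
      iteratedFDeriv ℝ k (f ∘ ψ) y :=
    hcomp.eq_iteratedFDeriv (le_refl _) y
  rw [← key]
  rw [FormalMultilinearSeries.taylorComp]
  rw [Finset.sum_eq_single_of_mem (OrderedFinpartition.atomic k) (Finset.mem_univ _)]
  · ext v
    simp only [FormalMultilinearSeries.compAlongOrderedFinpartition_apply,
      OrderedFinpartition.applyOrderedFinpartition_apply,
      ContinuousMultilinearMap.compContinuousLinearMap_apply]
    show ftaylorSeries ℝ f (ψ y) (OrderedFinpartition.atomic k).length _ = _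
    have : (OrderedFinpartition.atomic k).length = k := rfl
    congr 1
    funext m
    show ftaylorSeries ℝ ψ y 1 (v ∘ (OrderedFinpartition.atomic k).emb m) = fderiv ℝ ψ y (v m)
    rw [show ftaylorSeries ℝ ψ y 1 = iteratedFDeriv ℝ 1 ψ y from rfl,
      iteratedFDeriv_one_apply]
    rfl
  · intro c _ hc
    have hlen_le : c.length ≤ k := c.length_le
    have hlen_lt : c.length < k := by
      rcases lt_or_eq_of_le hlen_le with h | h
      · exact h
      · exact absurd (c.eq_atomic_of_length_eq h) hc
    have hlen_ge : 1 ≤ c.length := c.one_le_length hk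
    have hq : ftaylorSeries ℝ f (ψ y) c.length = 0 := hvanish c.length hlen_ge hlen_lt
    ext v
    simp only [FormalMultilinearSeries.compAlongOrderedFinpartition_apply, hq,
      ContinuousMultilinearMap.zero_apply]
end
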